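/- Let d be a positive integer, p a prime with p > 3d, b ≥ 1 and m ≥ 1 integers, and let i_0, …, i_{l−1} be l distinct elements of ℤ/(b) with 0 ≤ l ≤ b. Let A = ({1, …, m−1} × ℤ/(b)) ∪ {(m, i_0), …, (m, i_{l−1})}, and let τ be a permutation of A. Then ∑_{a ∈ A} δ_<^τ(a) ≥ b·∑_{a=0}^{m−1} (δ_<(a) − δ_∈(a)) + l·(δ_<(m) − δ_∈(m)). -/

import Mathlib

open scoped Classical

/-- `{x}' := {x}` if the fractional part is nonzero, else `1`. -/
noncomputable def fract' (x : ℚ) : ℚ := if Int.fract x = 0 then 1 else Int.fract x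

/-- `δ_∈(a) = 1` iff there is `i ≥ 1` with `p·i ≡ a (mod d)` and `i/d < {a/d}`. -/
noncomputable def deltaIn (d p a : ℕ) : ℤ :=
  if ∃ i : ℕ, 1 ≤ i ∧ p * i ≡ a [MOD d] ∧ (i : ℚ) / d < Int.fract ((a : ℚ) / d) then 1 else 0

/-- `δ_<(a) = 1` iff `{a/d}' < {pa/d}'`. -/
noncomputable def deltaLt (d p a : ℕ) : ℤ :=
  if fract' ((a : ℚ) / d) < fract' (((p : ℚ) * a) / d) then 1 else 0

/-- `ϖ(a) = ⌈(p−1)a/d⌉ − δ_∈(a)`. -/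
noncomputable def varpi (d p a : ℕ) : ℤ :=
  ⌈(((p : ℚ) - 1) * a) / d⌉ - deltaIn d p a

/-- The arithmetic polygon of `△ = [0, d]`: `p_△(m) = ∑_{a=0}^{m−1} ϖ(a)`. -/
noncomputable def pTri (d p m : ℕ) : ℤ := ∑ a ∈ Finset.range m, varpi d p a

set_option linter.unusedSectionVars false
set_option linter.unusedVariables false

namespace StmtAux

/-- normalized residue: `val` but with `0 ↦ d`. -/
def nu (d : ℕ) (x : ZMod d) : ℕ := if x = 0 then d else x.val

variable {d : ℕ} [NeZero d]

lemma d_pos : 0 < d := Nat.pos_of_ne_zero (NeZero.ne d)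

lemma nu_pos (x : ZMod d) : 0 < nu d x := by
  unfold nu; split
  · exact d_pos
  · rename_i h
    exact Nat.pos_of_ne_zero (fun h0 => h ((ZMod.val_eq_zero x).1 h0))

lemma nu_le (x : ZMod d) : nu d x ≤ d := by
  unfold nu; split
  · exact le_rfl
  · exact (ZMod.val_lt x).le

lemma nu_of_ne (x : ZMod d) (h : x ≠ 0) : nu d x = x.val := if_neg h

lemma nu_lt_of_ne (x : ZMod d) (h : x ≠ 0) : nu d x < d := by
  rw [nu_of_ne x h]; exact ZMod.val_lt x

lemma cast_nu (x : ZMod d) : ((nu d x : ℕ) : ZMod d) = x := by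
  unfold nu; split
  · rename_i h; simp [h]
  · exact ZMod.natCast_rightInverse x

lemma nu_natCast {a : ℕ} (h1 : 1 ≤ a) (h2 : a < d) : nu d (a : ZMod d) = a := by
  have hv : ((a : ZMod d)).val = a := by rw [ZMod.val_natCast, Nat.mod_eq_of_lt h2]
  have hne : (a : ZMod d) ≠ 0 := by
    intro h; rw [h, ZMod.val_zero] at hv; omega
  rw [nu_of_ne _ hne, hv]

lemma unit_mul_ne_zero (u : (ZMod d)ˣ) {x : ZMod d} (h : x ≠ 0) : (u : ZMod d) * x ≠ 0 := by
  intro h0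
  apply h
  have := congrArg (fun y => ((u⁻¹ : (ZMod d)ˣ) : ZMod d) * y) h0
  simpa [← mul_assoc] using this

lemma fract_natCast (a : ℕ) : Int.fract ((a : ℚ) / d) = ((a % d : ℕ) : ℚ) / d := by
  have hd0 : (d : ℚ) ≠ 0 := Nat.cast_ne_zero.2 (NeZero.ne d)
  have key : (a : ℚ) / d = ((a / d : ℕ) : ℚ) + ((a % d : ℕ) : ℚ) / d := by
    have h := Nat.div_add_mod a d
    have h2 : ((d * (a / d) + a % d : ℕ) : ℚ) = (a : ℚ) := by rw [h]
    push_cast at h2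
    field_simp
    linarith
  have hc : (((a / d : ℕ) : ℚ)) = (((a / d : ℕ) : ℤ) : ℚ) := (Int.cast_natCast _).symm
  rw [key, hc, Int.fract_intCast_add, Int.fract_eq_self.2 ⟨by positivity, by
    rw [div_lt_one (by exact_mod_cast d_pos (d := d))]
    exact_mod_cast Nat.mod_lt a (d_pos (d := d))⟩]

lemma fract'_natCast (a : ℕ) : fract' ((a : ℚ) / d) = ((nu d (a : ZMod d) : ℕ) : ℚ) / d := by
  have hd0 : (d : ℚ) ≠ 0 := Nat.cast_ne_zero.2 (NeZero.ne d)
  rw [fract', fract_natCast]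
  by_cases h : a % d = 0
  · rw [if_pos (by rw [h]; simp)]
    have : (a : ZMod d) = 0 := by
      rw [← ZMod.val_eq_zero, ZMod.val_natCast]; exact h
    rw [nu, if_pos this, div_self hd0]
  · rw [if_neg (by
      simp only [div_eq_zero_iff, Nat.cast_eq_zero]
      push_neg
      exact ⟨h, fun hc => (hd0 (by exact_mod_cast hc)).elim⟩)]
    have hne : (a : ZMod d) ≠ 0 := by
      rw [Ne, ← ZMod.val_eq_zero, ZMod.val_natCast]; exact h
    rw [nu, if_neg hne, ZMod.val_natCast]

lemma div_lt_div_nat {n1 n2 : ℕ} : ((n1 : ℚ) / d < (n2 : ℚ) / d) ↔ n1 < n2 := by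
  rw [div_lt_div_iff_of_pos_right (by exact_mod_cast d_pos (d := d))]
  exact_mod_cast Iff.rfl


section Delta

variable (u : (ZMod d)ˣ) {p : ℕ} (hu : (u : ZMod d) = (p : ZMod d))

include hu in
lemma fract'_lt_iff (n a : ℕ) :
    (fract' ((n : ℚ) / d) < fract' (((p : ℚ) * a) / d))
      ↔ nu d (n : ZMod d) < nu d ((u : ZMod d) * (a : ZMod d)) := by
  have hpa : ((p : ℚ) * a) / d = (((p * a : ℕ) : ℚ)) / d := by push_cast; ring
  rw [hpa, fract'_natCast, fract'_natCast]
  have hcast : ((p * a : ℕ) : ZMod d) = (u : ZMod d) * (a : ZMod d) := by push_cast; rw [hu]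
  rw [hcast, div_lt_div_nat]

include hu in
lemma deltaLt_eq (a : ℕ) :
    deltaLt d p a = if nu d (a : ZMod d) < nu d ((u : ZMod d) * (a : ZMod d)) then 1 else 0 := by
  rw [deltaLt, if_congr (fract'_lt_iff u hu a a) rfl rfl]

include hu in
lemma deltaIn_eq (a : ℕ) :
    deltaIn d p a = if nu d ((u⁻¹ : (ZMod d)ˣ) * (a : ZMod d)) < nu d (a : ZMod d) then 1 else 0 := by
  rw [deltaIn]
  congr 1
  rw [eq_iff_iff]
  constructor
  · rintro ⟨i, h1, hmod, hlt⟩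
    rw [fract_natCast, div_lt_div_nat] at hlt
    -- i < a % d, so a % d ≥ 1, hence (a : ZMod d) ≠ 0
    have hane : (a : ZMod d) ≠ 0 := by
      rw [Ne, ← ZMod.val_eq_zero, ZMod.val_natCast]; omega
    have hcast : ((p * i : ℕ) : ZMod d) = ((a : ℕ) : ZMod d) :=
      (ZMod.natCast_eq_natCast_iff _ _ _).2 hmod
    have hui : (u : ZMod d) * (i : ZMod d) = (a : ZMod d) := by
      rw [hu]; push_cast at hcast; exact hcast
    have hinv : ((u⁻¹ : (ZMod d)ˣ) : ZMod d) * (a : ZMod d) = (i : ZMod d) := by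
      rw [← hui, ← mul_assoc]
      simp
    have hival : nu d ((u⁻¹ : (ZMod d)ˣ) * (a : ZMod d)) = i := by
      rw [hinv]
      exact nu_natCast h1 (by
        have : a % d < d := Nat.mod_lt a d_pos
        omega)
    rw [hival, nu_of_ne _ hane, ZMod.val_natCast]
    exact hlt
  · intro h
    have hane : (a : ZMod d) ≠ 0 := by
      intro h0
      rw [h0, mul_zero] at h
      exact lt_irrefl _ h
    have hine : ((u⁻¹ : (ZMod d)ˣ) : ZMod d) * (a : ZMod d) ≠ 0 := unit_mul_ne_zero _ hane
    set s := nu d ((u⁻¹ : (ZMod d)ˣ) * (a : ZMod d)) with hs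
    have hs1 : 1 ≤ s := nu_pos _
    refine ⟨s, hs1, ?_, ?_⟩
    · have hscast : ((s : ℕ) : ZMod d) = ((u⁻¹ : (ZMod d)ˣ) : ZMod d) * (a : ZMod d) := cast_nu _
      have : ((p * s : ℕ) : ZMod d) = (a : ZMod d) := by
        push_cast [← hu, hscast, ← mul_assoc]
        simp
      exact (ZMod.natCast_eq_natCast_iff _ _ _).1 this
    · rw [fract_natCast, div_lt_div_nat]
      rw [nu_of_ne _ hane, ZMod.val_natCast] at h
      exact h

end Delta

noncomputable def Phi (d : ℕ) (u : (ZMod d)ˣ) (x : ZMod d) : ℤ :=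
  (if nu d x < nu d ((u : ZMod d) * x) then 1 else 0)
    - (if nu d (((u⁻¹ : (ZMod d)ˣ) : ZMod d) * x) < nu d x then 1 else 0)

noncomputable def gg (d : ℕ) (u : (ZMod d)ˣ) (k : ℕ) (x : ZMod d) : ℤ :=
  (if k < nu d ((u : ZMod d) * x) then 1 else 0) - (if k < nu d x then 1 else 0)

lemma Phi_zero (u : (ZMod d)ˣ) : Phi d u 0 = 0 := by
  simp [Phi]

lemma gg_zero (u : (ZMod d)ˣ) (k : ℕ) : gg d u k 0 = 0 := by
  simp [gg]

variable (u : (ZMod d)ˣ)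

lemma sigma_eq_iff {a e : ℕ} (ha1 : 1 ≤ a) (had : a < d) (he1 : 1 ≤ e) (hed : e < d) :
    nu d ((u : ZMod d) * (a : ZMod d)) = e ↔ a = nu d (((u⁻¹ : (ZMod d)ˣ) : ZMod d) * (e : ZMod d)) := by
  constructor
  · intro h
    have h1 : ((u : ZMod d) * (a : ZMod d)) = (e : ZMod d) := by
      rw [← cast_nu ((u : ZMod d) * (a : ZMod d)), h]
    have h2 : ((u⁻¹ : (ZMod d)ˣ) : ZMod d) * (e : ZMod d) = (a : ZMod d) := by
      rw [← h1, ← mul_assoc]; simp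
    rw [h2, nu_natCast ha1 had]
  · intro h
    have h1 : (a : ZMod d) = ((u⁻¹ : (ZMod d)ˣ) : ZMod d) * (e : ZMod d) := by
      rw [h, cast_nu]
    have h2 : (u : ZMod d) * (a : ZMod d) = (e : ZMod d) := by
      rw [h1, ← mul_assoc]; simp
    rw [h2, nu_natCast he1 hed]

/-- The key counting identity, by induction. -/
lemma count_sum : ∀ e : ℕ, 1 ≤ e → e ≤ d →
    ∑ a ∈ Finset.range e, Phi d u (a : ZMod d) =
      ∑ a ∈ Finset.Ico 1 e, (if e ≤ nu d ((u : ZMod d) * (a : ZMod d)) then (1 : ℤ) else 0) := by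
  intro e he1
  induction e, he1 using Nat.le_induction with
  | base =>
    intro _
    simp [Phi_zero]
  | succ e he1 ih =>
    intro hed
    have hed' : e < d := hed
    have ihe := ih (le_of_lt hed')
    rw [Finset.sum_range_succ, Finset.sum_Ico_succ_top (by omega : 1 ≤ e)]
    -- rewrite the Ico-sum with threshold e+1 in terms of threshold e
    have step : ∑ a ∈ Finset.Ico 1 e, (if e + 1 ≤ nu d ((u : ZMod d) * (a : ZMod d)) then (1 : ℤ) else 0)
        = ∑ a ∈ Finset.Ico 1 e, ((if e ≤ nu d ((u : ZMod d) * (a : ZMod d)) then (1 : ℤ) else 0)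
            - (if a = nu d (((u⁻¹ : (ZMod d)ˣ) : ZMod d) * (e : ZMod d)) then (1 : ℤ) else 0)) := by
      apply Finset.sum_congr rfl
      intro a ha
      rw [Finset.mem_Ico] at ha
      have hiff := sigma_eq_iff u (a := a) (e := e) (by omega) (by omega) he1 hed'
      by_cases hae : nu d ((u : ZMod d) * (a : ZMod d)) = e
      · rw [if_pos (hiff.1 hae)]
        rw [hae]
        split_ifs <;> omega
      · rw [if_neg (fun hc => hae (hiff.2 hc))]
        have : (e + 1 ≤ nu d ((u : ZMod d) * (a : ZMod d))) ↔ (e ≤ nu d ((u : ZMod d) * (a : ZMod d))) := by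
          omega
        rw [if_congr this rfl rfl]
        ring
    rw [step, Finset.sum_sub_distrib, Finset.sum_ite_eq' (Finset.Ico 1 e)
      (nu d (((u⁻¹ : (ZMod d)ˣ) : ZMod d) * (e : ZMod d))) (fun _ => (1:ℤ))]
    rw [← ihe]
    have hnue : nu d ((e : ℕ) : ZMod d) = e := nu_natCast he1 hed'
    have hsi1 : 1 ≤ nu d (((u⁻¹ : (ZMod d)ˣ) : ZMod d) * (e : ZMod d)) := nu_pos _
    have hPhi : Phi d u ((e : ℕ) : ZMod d)
        = (if e + 1 ≤ nu d ((u : ZMod d) * (e : ZMod d)) then (1:ℤ) else 0)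
          - (if nu d (((u⁻¹ : (ZMod d)ˣ) : ZMod d) * (e : ZMod d)) ∈ Finset.Ico 1 e then (1:ℤ) else 0) := by
      have h1 : (nu d ((e : ℕ) : ZMod d) < nu d ((u : ZMod d) * (e : ZMod d)))
          ↔ (e + 1 ≤ nu d ((u : ZMod d) * (e : ZMod d))) := by omega
      have h2 : (nu d (((u⁻¹ : (ZMod d)ˣ) : ZMod d) * (e : ZMod d)) < nu d ((e : ℕ) : ZMod d))
          ↔ (nu d (((u⁻¹ : (ZMod d)ˣ) : ZMod d) * (e : ZMod d)) ∈ Finset.Ico 1 e) := by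
        rw [Finset.mem_Ico]; omega
      rw [Phi, if_congr h1 rfl rfl, if_congr h2 rfl rfl]
    rw [hPhi]
    ring

lemma sum_gg_Ico (k e : ℕ) (he1 : 1 ≤ e) (hed : e ≤ d) :
    ∑ a ∈ Finset.range e, gg d u k (a : ZMod d) =
      ∑ a ∈ Finset.Ico 1 e, ((if k < nu d ((u : ZMod d) * (a : ZMod d)) then (1 : ℤ) else 0)
        - (if k < a then (1 : ℤ) else 0)) := by
  rw [Finset.range_eq_Ico, Finset.sum_eq_sum_Ico_succ_bot (by omega : 0 < e)]
  rw [show ((0 : ℕ) : ZMod d) = 0 by norm_num, gg_zero, zero_add]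
  apply Finset.sum_congr rfl
  intro a ha
  rw [Finset.mem_Ico] at ha
  rw [gg, nu_natCast (by omega) (by omega)]

/-- The core: choice of threshold `k` matching the counting. -/
lemma core_choice (e : ℕ) (he1 : 1 ≤ e) (hed : e ≤ d) : ∃ k : ℕ,
    (∑ a ∈ Finset.range e, gg d u k (a : ZMod d) = ∑ a ∈ Finset.range e, Phi d u (a : ZMod d))
    ∧ Phi d u ((e : ℕ) : ZMod d) ≤ gg d u k ((e : ℕ) : ZMod d) := by
  by_cases hcase : nu d (((u⁻¹ : (ZMod d)ˣ) : ZMod d) * (e : ZMod d)) ≤ e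
  · refine ⟨e - 1, ?_, ?_⟩
    · rw [count_sum u e he1 hed, sum_gg_Ico u (e-1) e he1 hed]
      apply Finset.sum_congr rfl
      intro a ha
      rw [Finset.mem_Ico] at ha
      rw [if_neg (by omega : ¬ (e - 1 < a)), sub_zero]
      apply if_congr _ rfl rfl
      omega
    · rcases Nat.lt_or_ge e d with hlt | hge
      · -- e < d
        have hnue : nu d ((e : ℕ) : ZMod d) = e := nu_natCast he1 hlt
        rw [Phi, gg, hnue]
        by_cases hsie : nu d (((u⁻¹ : (ZMod d)ˣ) : ZMod d) * (e : ZMod d)) = e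
        · have hσe : nu d ((u : ZMod d) * (e : ZMod d)) = e :=
            (sigma_eq_iff u he1 hlt he1 hlt).2 hsie.symm
          rw [hσe]
          split_ifs <;> omega
        · have hsilt : nu d (((u⁻¹ : (ZMod d)ˣ) : ZMod d) * (e : ZMod d)) < e := by omega
          split_ifs <;> omega
      · -- e = d
        have he : e = d := le_antisymm hed hge
        rw [he, show ((d : ℕ) : ZMod d) = 0 from ZMod.natCast_self d, Phi_zero, gg_zero]
  · push_neg at hcase
    have hlt : e < d := lt_of_lt_of_le hcase (nu_le _)
    refine ⟨e, ?_, ?_⟩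
    · rw [count_sum u e he1 hed, sum_gg_Ico u e e he1 hed]
      apply Finset.sum_congr rfl
      intro a ha
      rw [Finset.mem_Ico] at ha
      rw [if_neg (by omega : ¬ (e < a)), sub_zero]
      by_cases hae : nu d ((u : ZMod d) * (a : ZMod d)) = e
      · exfalso
        have := (sigma_eq_iff u (by omega) (by omega) he1 hlt).1 hae
        omega
      · apply if_congr _ rfl rfl
        omega
    · have hnue : nu d ((e : ℕ) : ZMod d) = e := nu_natCast he1 hlt
      rw [Phi, gg, hnue]
      split_ifs <;> omega


lemma sum_range_d (H : ZMod d → ℤ) : ∑ a ∈ Finset.range d, H (a : ZMod d) = ∑ x : ZMod d, H x := by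
  refine Finset.sum_nbij' (fun a => (a : ZMod d)) (fun x => x.val) ?_ ?_ ?_ ?_ ?_
  · intro a _; exact Finset.mem_univ _
  · intro x _; exact Finset.mem_range.2 (ZMod.val_lt x)
  · intro a ha
    rw [Finset.mem_range] at ha
    show ((a : ZMod d)).val = a
    rw [ZMod.val_natCast, Nat.mod_eq_of_lt ha]
  · intro x _
    show ((x.val : ℕ) : ZMod d) = x
    exact ZMod.natCast_rightInverse x
  · intro a _; rfl

lemma sum_shift (H : ZMod d → ℤ) (c : ZMod d) : ∑ x : ZMod d, H (c + x) = ∑ x : ZMod d, H x :=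
  Fintype.sum_equiv (Equiv.addLeft c) _ _ (fun x => rfl)

lemma sum_range_mul_add (H : ZMod d → ℤ) (q e : ℕ) :
    ∑ a ∈ Finset.range (q * d + e), H (a : ZMod d)
      = q * ∑ x : ZMod d, H x + ∑ a ∈ Finset.range e, H (a : ZMod d) := by
  induction q with
  | zero => simp
  | succ q ih =>
    have hsplit : (q + 1) * d + e = (q * d + e) + d := by ring
    rw [hsplit, Finset.range_eq_Ico, ← Finset.sum_Ico_consecutive _ (Nat.zero_le (q * d + e))
      (by omega : q * d + e ≤ (q * d + e) + d)]
    rw [← Finset.range_eq_Ico, ih]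
    have htail : ∑ a ∈ Finset.Ico (q * d + e) (q * d + e + d), H (a : ZMod d)
        = ∑ x : ZMod d, H x := by
      rw [Finset.sum_Ico_eq_sum_range]
      have : ∀ a, H (((q * d + e) + a : ℕ) : ZMod d) = H (((q * d + e : ℕ) : ZMod d) + (a : ZMod d)) := by
        intro a; push_cast; ring_nf
      simp only [Nat.add_sub_cancel_left]
      calc ∑ a ∈ Finset.range d, H (((q * d + e) + a : ℕ) : ZMod d)
          = ∑ a ∈ Finset.range d, (fun x => H (((q * d + e : ℕ) : ZMod d) + x)) (a : ZMod d) := by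
            apply Finset.sum_congr rfl; intro a _; exact this a
        _ = ∑ x : ZMod d, H (((q * d + e : ℕ) : ZMod d) + x) := sum_range_d (fun x => H (((q * d + e : ℕ) : ZMod d) + x))
        _ = ∑ x : ZMod d, H x := sum_shift H _
    rw [htail]
    push_cast
    ring

lemma sum_univ_Phi : ∑ x : ZMod d, Phi d u x = 0 := by
  rw [← sum_range_d, count_sum u d (d_pos (d := d)) le_rfl]
  apply Finset.sum_eq_zero
  intro a ha
  rw [Finset.mem_Ico] at ha
  rw [if_neg]
  intro hge
  have hne : ((a : ℕ) : ZMod d) ≠ 0 := by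
    rw [Ne, ← ZMod.val_eq_zero, ZMod.val_natCast, Nat.mod_eq_of_lt (by omega)]
    omega
  have := nu_lt_of_ne _ (unit_mul_ne_zero u hne)
  omega

def mulUnitEquiv (u : (ZMod d)ˣ) : ZMod d ≃ ZMod d where
  toFun x := (u : ZMod d) * x
  invFun x := ((u⁻¹ : (ZMod d)ˣ) : ZMod d) * x
  left_inv x := by simp [← mul_assoc]
  right_inv x := by simp [← mul_assoc]

lemma sum_univ_gg (k : ℕ) : ∑ x : ZMod d, gg d u k x = 0 := by
  unfold gg
  rw [Finset.sum_sub_distrib, sub_eq_zero]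
  exact Fintype.sum_equiv (mulUnitEquiv u) _ _ (fun x => rfl)


lemma hall {b : ℕ} (u : (ZMod d)ˣ) (A : Finset (ℕ × ZMod b)) (τ : Equiv.Perm (ℕ × ZMod b))
    (hτ : ∀ a ∈ A, τ a ∈ A) (k : ℕ) :
    ∑ x ∈ A, gg d u k ((x.1 : ℕ) : ZMod d)
      ≤ ∑ x ∈ A, (if nu d (((τ x).1 : ℕ) : ZMod d) < nu d ((u : ZMod d) * ((x.1 : ℕ) : ZMod d))
          then (1 : ℤ) else 0) := by
  unfold gg
  rw [Finset.sum_sub_distrib, Finset.sum_boole, Finset.sum_boole, Finset.sum_boole]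
  set Xc := A.filter (fun x => k < nu d ((u : ZMod d) * ((x.1 : ℕ) : ZMod d))) with hXc
  set Xu := A.filter (fun x => k < nu d ((x.1 : ℕ) : ZMod d)) with hXu
  set Bad := A.filter (fun x =>
    nu d (((τ x).1 : ℕ) : ZMod d) < nu d ((u : ZMod d) * ((x.1 : ℕ) : ZMod d))) with hBad
  have h1 : (Xc \ Bad).card ≤ Xu.card := by
    apply Finset.card_le_card_of_injOn (fun x => τ x)
    · intro x hx
      rw [Finset.mem_coe, Finset.mem_sdiff, hXc, hBad, Finset.mem_filter] at hx
      obtain ⟨⟨hxA, hxk⟩, hnb⟩ := hx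
      have hτA : τ x ∈ A := hτ x hxA
      have hge : ¬ (nu d (((τ x).1 : ℕ) : ZMod d) < nu d ((u : ZMod d) * ((x.1 : ℕ) : ZMod d))) := by
        intro hc
        exact hnb (Finset.mem_filter.2 ⟨hxA, hc⟩)
      rw [hXu, Finset.mem_coe, Finset.mem_filter]
      exact ⟨hτA, by beta_reduce; omega⟩
    · intro x _ y _ hxy
      exact τ.injective hxy
  have h2 := Finset.card_inter_add_card_sdiff Xc Bad
  have h3 : (Xc ∩ Bad).card ≤ Bad.card := Finset.card_le_card Finset.inter_subset_right
  omega

lemma sumA {b m : ℕ} [NeZero b] (hm : 1 ≤ m) (I : Finset (ZMod b)) (h : ℕ → ℤ) (h0 : h 0 = 0) :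
    ∑ x ∈ ((Finset.Icc 1 (m - 1)) ×ˢ (Finset.univ : Finset (ZMod b)) ∪ ({m} : Finset ℕ) ×ˢ I), h x.1
      = b * ∑ a ∈ Finset.range m, h a + I.card * h m := by
  have hdisj : Disjoint ((Finset.Icc 1 (m - 1)) ×ˢ (Finset.univ : Finset (ZMod b)))
      (({m} : Finset ℕ) ×ˢ I) := by
    rw [Finset.disjoint_left]
    rintro ⟨a, v⟩ h1 h2
    rw [Finset.mem_product, Finset.mem_Icc] at h1
    rw [Finset.mem_product, Finset.mem_singleton] at h2
    omega
  rw [Finset.sum_union hdisj, Finset.sum_product, Finset.sum_product]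
  have hrange : Finset.range m = insert 0 (Finset.Icc 1 (m - 1)) := by
    ext a
    simp only [Finset.mem_range, Finset.mem_insert, Finset.mem_Icc]
    omega
  have h01 : (0 : ℕ) ∉ Finset.Icc 1 (m - 1) := by simp
  rw [hrange, Finset.sum_insert h01, h0, zero_add]
  simp only [Finset.sum_const, Finset.card_univ, ZMod.card, Finset.sum_singleton,
    nsmul_eq_mul]
  rw [Finset.mul_sum]

end StmtAux

open StmtAux

theorem stmt2 (d p : ℕ) (hd : 0 < d) (hp : p.Prime) (hpd : 3 * d < p)
    (b : ℕ) [NeZero b] (m : ℕ) (hm : 1 ≤ m)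
    (I : Finset (ZMod b))
    (A : Finset (ℕ × ZMod b))
    (hA : A = (Finset.Icc 1 (m - 1)) ×ˢ (Finset.univ : Finset (ZMod b)) ∪
      ({m} : Finset ℕ) ×ˢ I)
    (τ : Equiv.Perm (ℕ × ZMod b)) (hτ : ∀ a ∈ A, τ a ∈ A) :
    (b : ℤ) * ∑ a ∈ Finset.range m, (deltaLt d p a - deltaIn d p a) +
      (I.card : ℤ) * (deltaLt d p m - deltaIn d p m) ≤
    ∑ a ∈ A, (if fract' (((τ a).1 : ℚ) / d) < fract' (((p : ℚ) * a.1) / d)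
      then (1 : ℤ) else 0) := by
  haveI : NeZero d := ⟨hd.ne'⟩
  have hco : p.Coprime d := (Nat.Prime.coprime_iff_not_dvd hp).2 (fun hdvd => by
    have := Nat.le_of_dvd hd hdvd
    omega)
  set u : (ZMod d)ˣ := ZMod.unitOfCoprime p hco with hudef
  have hu : (u : ZMod d) = (p : ZMod d) := ZMod.coe_unitOfCoprime p hco
  -- replace deltas with Phi
  have hdelta : ∀ a : ℕ, deltaLt d p a - deltaIn d p a = Phi d u (a : ZMod d) := by
    intro a
    rw [deltaLt_eq u hu a, deltaIn_eq u hu a, Phi]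
  -- decompose m
  obtain ⟨q, e, hqe, he1, hed⟩ : ∃ q e : ℕ, m = q * d + e ∧ 1 ≤ e ∧ e ≤ d := by
    refine ⟨(m - 1) / d, (m - 1) % d + 1, ?_, by omega, ?_⟩
    · have hdm := Nat.div_add_mod (m - 1) d
      rw [← Nat.add_assoc, Nat.mul_comm, hdm]
      omega
    · have := Nat.mod_lt (m - 1) hd
      omega
  obtain ⟨k, hk1, hk2⟩ := core_choice u e he1 hed
  have hme : ((m : ℕ) : ZMod d) = ((e : ℕ) : ZMod d) := by
    rw [hqe]
    push_cast [ZMod.natCast_self]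
    ring
  -- LHS rewriting
  have hL1 : ∑ a ∈ Finset.range m, (deltaLt d p a - deltaIn d p a)
      = ∑ a ∈ Finset.range e, Phi d u (a : ZMod d) := by
    rw [Finset.sum_congr rfl (fun a _ => hdelta a), hqe,
      sum_range_mul_add (Phi d u) q e, sum_univ_Phi u]
    ring
  have hL2 : deltaLt d p m - deltaIn d p m = Phi d u ((e : ℕ) : ZMod d) := by
    rw [hdelta m, hme]
  -- gg sums
  have hG1 : ∑ a ∈ Finset.range m, gg d u k (a : ZMod d)
      = ∑ a ∈ Finset.range e, gg d u k (a : ZMod d) := by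
    rw [hqe, sum_range_mul_add (gg d u k) q e, sum_univ_gg u k]
    ring
  have hG2 : gg d u k ((m : ℕ) : ZMod d) = gg d u k ((e : ℕ) : ZMod d) := by rw [hme]
  -- sum over A of gg
  have hGA : ∑ x ∈ A, gg d u k ((x.1 : ℕ) : ZMod d)
      = (b : ℤ) * ∑ a ∈ Finset.range m, gg d u k (a : ZMod d)
        + (I.card : ℤ) * gg d u k ((m : ℕ) : ZMod d) := by
    rw [hA]
    exact sumA hm I (fun a => gg d u k (a : ZMod d)) (by
      show gg d u k ((0 : ℕ) : ZMod d) = 0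
      rw [show ((0 : ℕ) : ZMod d) = 0 by norm_num, gg_zero])
  -- chain
  calc (b : ℤ) * ∑ a ∈ Finset.range m, (deltaLt d p a - deltaIn d p a) +
      (I.card : ℤ) * (deltaLt d p m - deltaIn d p m)
      = (b : ℤ) * ∑ a ∈ Finset.range e, Phi d u (a : ZMod d)
        + (I.card : ℤ) * Phi d u ((e : ℕ) : ZMod d) := by rw [hL1, hL2]
    _ ≤ (b : ℤ) * ∑ a ∈ Finset.range e, gg d u k (a : ZMod d)
        + (I.card : ℤ) * gg d u k ((e : ℕ) : ZMod d) := by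
        rw [hk1]
        have hb : (0 : ℤ) ≤ (b : ℤ) := by positivity
        have hI : (0 : ℤ) ≤ (I.card : ℤ) := by positivity
        nlinarith [hk2]
    _ = ∑ x ∈ A, gg d u k ((x.1 : ℕ) : ZMod d) := by
        rw [hGA, hG1, hG2]
    _ ≤ ∑ x ∈ A, (if nu d (((τ x).1 : ℕ) : ZMod d)
          < nu d ((u : ZMod d) * ((x.1 : ℕ) : ZMod d)) then (1 : ℤ) else 0) :=
        hall u A τ hτ k
    _ = ∑ a ∈ A, (if fract' (((τ a).1 : ℚ) / d) < fract' (((p : ℚ) * a.1) / d)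
          then (1 : ℤ) else 0) := by
        apply Finset.sum_congr rfl
        intro x _
        rw [if_congr (fract'_lt_iff u hu (τ x).1 x.1) rfl rfl]
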